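/- Let 0 < λ ≤ √6, let J denote the 3×3 Jacobian matrix of the reduced vector field F at P₂ = (0, √((6−λ²)/18), λ/3), and let v = ∇f(P₂) = (0, √(2(6−λ²))/3, λ/3), where f(S,U,P) = S² + U² + P²/2. Then J·v = (λ²/3 − 2/3)·v; i.e., the normal vector to the Bianchi I constraint surface at P₂ is an eigenvector of the linearization with eigenvalue ε₂ = −2/3 + λ²/3. Consequently the tangent plane to the surface {f = 1/3} at P₂ coincides with the eigenspace of the eigenvalue ε₁ = −1 + λ²/6. -/

import Mathlib

/-- The reduced vector field `F : ℝ³ → ℝ³` in the variables `(S, U, P)`. -/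
noncomputable def Fvec (lam : ℝ) (x : Fin 3 → ℝ) : Fin 3 → ℝ :=
  ![-1 / (3 * Real.sqrt 3) - (2 / 3) * x 0 + x 0 ^ 2 / Real.sqrt 3
      + x 1 ^ 2 / Real.sqrt 3 + x 2 ^ 2 / (2 * Real.sqrt 3)
      + 2 * x 0 ^ 3 - x 0 * x 1 ^ 2 + x 0 * x 2 ^ 2,
    x 1 * (1 / 3 - (lam / 2) * x 2 + 2 * x 0 ^ 2 - x 1 ^ 2 + x 2 ^ 2),
    -(2 / 3) * x 2 + lam * x 1 ^ 2 + 2 * x 0 ^ 2 * x 2 - x 1 ^ 2 * x 2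
      + x 2 ^ 3]

/-- The Jacobian matrix of `F` at `x`, with the convention that row `i`
contains the partial derivatives with respect to the `i`-th variable:
entry `(i, j)` is `∂F_j/∂x_i`. -/
noncomputable def jac (lam : ℝ) (x : Fin 3 → ℝ) : Matrix (Fin 3) (Fin 3) ℝ :=
  Matrix.of fun i j => deriv (fun s => Fvec lam (Function.update x i s) j) (x i)

lemma cubicDeriv (c0 c1 c2 c3 x : ℝ) :
    deriv (fun s : ℝ => c0 + c1 * s + c2 * s ^ 2 + c3 * s ^ 3) x
      = c1 + 2 * c2 * x + 3 * c3 * x ^ 2 := by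
  have h : HasDerivAt (fun s : ℝ => c0 + c1 * s + c2 * s ^ 2 + c3 * s ^ 3)
      (c1 + 2 * c2 * x + 3 * c3 * x ^ 2) x := by
    have h1 : HasDerivAt (fun s : ℝ => s) 1 x := hasDerivAt_id x
    have h2 := hasDerivAt_pow 2 x
    have h3 := hasDerivAt_pow 3 x
    have := (((hasDerivAt_const x c0).add (h1.const_mul c1)).add
        (h2.const_mul c2)).add (h3.const_mul c3)
    exact this.congr_deriv (by push_cast; ring)
  exact h.deriv

lemma upd0 (a b c s : ℝ) : Function.update ![a, b, c] (0 : Fin 3) s = ![s, b, c] := by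
  funext k; fin_cases k <;> simp [Function.update]

lemma upd1 (a b c s : ℝ) : Function.update ![a, b, c] (1 : Fin 3) s = ![a, s, c] := by
  funext k; fin_cases k <;> simp [Function.update]

lemma upd2 (a b c s : ℝ) : Function.update ![a, b, c] (2 : Fin 3) s = ![a, b, s] := by
  funext k; fin_cases k <;> simp [Function.update]

lemma e01 (lam u p : ℝ) :
    deriv (fun s => Fvec lam (Function.update ![0, u, p] (0 : Fin 3) s) 1) 0 = 0 := by
  have h : (fun s => Fvec lam (Function.update ![0, u, p] (0 : Fin 3) s) 1)
      = fun s => u * (1 / 3 - (lam / 2) * p - u ^ 2 + p ^ 2)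
          + 0 * s + (2 * u) * s ^ 2 + 0 * s ^ 3 := by
    funext s; simp [Fvec, upd0]; ring
  rw [h, cubicDeriv]; ring

lemma e02 (lam u p : ℝ) :
    deriv (fun s => Fvec lam (Function.update ![0, u, p] (0 : Fin 3) s) 2) 0 = 0 := by
  have h : (fun s => Fvec lam (Function.update ![0, u, p] (0 : Fin 3) s) 2)
      = fun s => (-(2 / 3) * p + lam * u ^ 2 - u ^ 2 * p + p ^ 3)
          + 0 * s + (2 * p) * s ^ 2 + 0 * s ^ 3 := by
    funext s; simp [Fvec, upd0]; ring
  rw [h, cubicDeriv]; ring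

lemma e11 (lam u p : ℝ) :
    deriv (fun s => Fvec lam (Function.update ![0, u, p] (1 : Fin 3) s) 1) u
      = 1 / 3 - (lam / 2) * p + p ^ 2 - 3 * u ^ 2 := by
  have h : (fun s => Fvec lam (Function.update ![0, u, p] (1 : Fin 3) s) 1)
      = fun s => 0 + (1 / 3 - (lam / 2) * p + p ^ 2) * s + 0 * s ^ 2 + (-1) * s ^ 3 := by
    funext s; simp [Fvec, upd1]; ring
  rw [h, cubicDeriv]; ring

lemma e12 (lam u p : ℝ) :
    deriv (fun s => Fvec lam (Function.update ![0, u, p] (1 : Fin 3) s) 2) u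
      = 2 * (lam - p) * u := by
  have h : (fun s => Fvec lam (Function.update ![0, u, p] (1 : Fin 3) s) 2)
      = fun s => (-(2 / 3) * p + p ^ 3) + 0 * s + (lam - p) * s ^ 2 + 0 * s ^ 3 := by
    funext s; simp [Fvec, upd1]; ring
  rw [h, cubicDeriv]; ring

lemma e21 (lam u p : ℝ) :
    deriv (fun s => Fvec lam (Function.update ![0, u, p] (2 : Fin 3) s) 1) p
      = -(u * lam / 2) + 2 * u * p := by
  have h : (fun s => Fvec lam (Function.update ![0, u, p] (2 : Fin 3) s) 1)
      = fun s => u * (1 / 3 - u ^ 2) + (-(u * lam / 2)) * s + u * s ^ 2 + 0 * s ^ 3 := by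
    funext s; simp [Fvec, upd2]; ring
  rw [h, cubicDeriv]; ring

lemma e22 (lam u p : ℝ) :
    deriv (fun s => Fvec lam (Function.update ![0, u, p] (2 : Fin 3) s) 2) p
      = -2 / 3 - u ^ 2 + 3 * p ^ 2 := by
  have h : (fun s => Fvec lam (Function.update ![0, u, p] (2 : Fin 3) s) 2)
      = fun s => lam * u ^ 2 + (-2 / 3 - u ^ 2) * s + 0 * s ^ 2 + 1 * s ^ 3 := by
    funext s; simp [Fvec, upd2]; ring
  rw [h, cubicDeriv]; ring

/-- For `0 < λ ≤ √6`, the gradient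
`v = ∇f(P₂) = (0, √(2(6−λ²))/3, λ/3)` of the constraint function
`f(S,U,P) = S² + U² + P²/2` — the normal vector to the Bianchi I constraint
surface `{f = 1/3}` at `P₂ = (0, √((6−λ²)/18), λ/3)` — is an eigenvector of
the Jacobian `J` of the reduced vector field at `P₂` with eigenvalue
`ε₂ = −2/3 + λ²/3`, i.e. `J·v = (λ²/3 − 2/3)·v`. Consequently the tangent
plane to `{f = 1/3}` at `P₂` coincides with the eigenspace of the eigenvalue
`ε₁ = −1 + λ²/6`. -/
theorem normal_vector_eigenvector_at_P2
    (lam : ℝ) (hlam : 0 < lam) (hlam6 : lam ≤ Real.sqrt 6) :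
    (jac lam ![0, Real.sqrt ((6 - lam ^ 2) / 18), lam / 3]).mulVec
        ![0, Real.sqrt (2 * (6 - lam ^ 2)) / 3, lam / 3]
      = (lam ^ 2 / 3 - 2 / 3) •
          ![0, Real.sqrt (2 * (6 - lam ^ 2)) / 3, lam / 3] := by
  have h6 : lam ^ 2 ≤ 6 := by
    nlinarith [Real.sq_sqrt (show (0:ℝ) ≤ 6 by norm_num), Real.sqrt_nonneg 6]
  set u := Real.sqrt ((6 - lam ^ 2) / 18) with hu
  have hu2 : u ^ 2 = (6 - lam ^ 2) / 18 :=
    Real.sq_sqrt (by linarith : (0:ℝ) ≤ (6 - lam ^ 2) / 18)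
  have hw : Real.sqrt (2 * (6 - lam ^ 2)) = 6 * u := by
    have h36 : (2 * (6 - lam ^ 2)) = 6 ^ 2 * ((6 - lam ^ 2) / 18) := by ring
    rw [h36, Real.sqrt_mul (by positivity), Real.sqrt_sq (by norm_num : (0:ℝ) ≤ 6)]
  funext i
  fin_cases i <;>
    simp [jac, Matrix.mulVec, dotProduct, Fin.sum_univ_three,
      e01, e02, e11, e12, e21, e22, hw]
  · linear_combination (-6 * u) * hu2
  · ring
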